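/- Let G = (V,E) be a strongly connected directed graph on M vertices. Then the control system ẋ = Σ_{e∈E} u_e(t) B_e x is small-time globally controllable from every point of int P(V): for every x^0, x^f ∈ int P(V) and every T > 0 there exist a continuously differentiable curve x : [0,T] → ℝ^M and functions u_e : [0,T] → [0,∞) for each e ∈ E such that x(0) = x^0, x(T) = x^f, and x'(t) = Σ_{e∈E} u_e(t) B_e x(t) for all t ∈ [0,T]. -/

import Mathlib

open Matrix

noncomputable section

/-- The (relative) interior of the probability simplex: strictly positive densities. -/
def probSimplexInterior (M : ℕ) : Set (Fin M → ℝ) :=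
  {x | (∀ i, 0 < x i) ∧ ∑ i, x i = 1}

/-- The control matrix `B_e` for an edge `e = (i, j)`: entry `(i,i)` is `-1`, entry
`(j,i)` is `1`, all other entries vanish. -/
def Bmat (M : ℕ) (e : Fin M × Fin M) : Matrix (Fin M) (Fin M) ℝ :=
  fun i j =>
    (if i = e.1 ∧ j = e.1 then (-1 : ℝ) else 0) + (if i = e.2 ∧ j = e.1 then 1 else 0)

def dvec (M : ℕ) (i j : Fin M) : Fin M → ℝ :=
  fun k => (if k = j then (1 : ℝ) else 0) - (if k = i then 1 else 0)

lemma Bmat_mulVec (M : ℕ) (e : Fin M × Fin M) (x : Fin M → ℝ) :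
    (Bmat M e).mulVec x = x e.1 • dvec M e.1 e.2 := by
  funext k
  simp only [Matrix.mulVec, dotProduct, Bmat, dvec, Pi.smul_apply, smul_eq_mul,
    add_mul, ite_mul, one_mul, neg_one_mul, zero_mul, Finset.sum_add_distrib]
  by_cases h3 : (e.1 : Fin M) = e.2 <;> by_cases h1 : k = e.1 <;> by_cases h2 : k = e.2 <;>
    simp [h1, h2, h3, Finset.sum_ite_eq'] <;> simp_all [eq_comm] <;> ring

def InCone (M : ℕ) (E : Finset (Fin M × Fin M)) (v : Fin M → ℝ) : Prop :=
  ∃ c : Fin M × Fin M → ℝ, (∀ e, 0 ≤ c e) ∧ v = ∑ e ∈ E, c e • dvec M e.1 e.2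

lemma inCone_zero (M : ℕ) (E : Finset (Fin M × Fin M)) : InCone M E 0 :=
  ⟨0, fun _ => le_refl 0, by simp⟩

lemma inCone_add {M : ℕ} {E : Finset (Fin M × Fin M)} {v w : Fin M → ℝ}
    (hv : InCone M E v) (hw : InCone M E w) : InCone M E (v + w) := by
  obtain ⟨c, hc, rfl⟩ := hv
  obtain ⟨d, hd, rfl⟩ := hw
  exact ⟨c + d, fun e => add_nonneg (hc e) (hd e), by
    rw [← Finset.sum_add_distrib]; exact Finset.sum_congr rfl fun e _ => by
      simp [add_smul]⟩

lemma inCone_smul {M : ℕ} {E : Finset (Fin M × Fin M)} {v : Fin M → ℝ} {a : ℝ}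
    (ha : 0 ≤ a) (hv : InCone M E v) : InCone M E (a • v) := by
  obtain ⟨c, hc, rfl⟩ := hv
  exact ⟨a • c, fun e => mul_nonneg ha (hc e), by
    rw [Finset.smul_sum]; exact Finset.sum_congr rfl fun e _ => by
      simp [smul_smul]⟩

lemma inCone_edge {M : ℕ} {E : Finset (Fin M × Fin M)} {e : Fin M × Fin M}
    (he : e ∈ E) : InCone M E (dvec M e.1 e.2) := by
  refine ⟨fun f => if f = e then 1 else 0, fun f => by positivity, ?_⟩
  simp only [ite_smul, one_smul, zero_smul]
  simp [Finset.sum_ite_eq', he]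

lemma inCone_path {M : ℕ} {E : Finset (Fin M × Fin M)} {i j : Fin M}
    (h : Relation.ReflTransGen (fun a b => (a, b) ∈ E) i j) :
    InCone M E (dvec M i j) := by
  induction h with
  | refl => have : dvec M i i = 0 := by funext k; simp [dvec]
            rw [this]; exact inCone_zero M E
  | tail hab hbc ih =>
      rename_i b c
      have : dvec M i c = dvec M i b + dvec M b c := by
        funext k; simp only [dvec, Pi.add_apply]; ring
      rw [this]; exact inCone_add ih (inCone_edge hbc)

lemma inCone_of_sum_zero {M : ℕ} {E : Finset (Fin M × Fin M)}
    (hconn : ∀ i j : Fin M, Relation.ReflTransGen (fun a b => (a, b) ∈ E) i j)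
    (v : Fin M → ℝ) (hv : ∑ i, v i = 0) : InCone M E v := by
  classical
  set a : Fin M → ℝ := fun k => max (-(v k)) 0 with ha
  set b : Fin M → ℝ := fun k => max (v k) 0 with hb
  have hann : ∀ k, 0 ≤ a k := fun k => le_max_right _ _
  have hbnn : ∀ k, 0 ≤ b k := fun k => le_max_right _ _
  have hab : ∀ k, b k - a k = v k := by
    intro k
    rcases le_total (v k) 0 with h | h
    · rw [hb, ha]
      simp only []
      rw [max_eq_right h, max_eq_left (neg_nonneg.2 h)]; ring
    · rw [hb, ha]
      simp only []
      rw [max_eq_left h, max_eq_right (neg_nonpos.2 h)]; ring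
  have hS' : ∑ k, a k = ∑ k, b k := by
    have h0 : ∑ k, (b k - a k) = 0 := by
      rw [Finset.sum_congr rfl fun k _ => hab k]; exact hv
    rw [Finset.sum_sub_distrib] at h0; linarith
  set S : ℝ := ∑ k, b k with hSdef
  by_cases hS : S = 0
  · have hb0 : ∀ k, b k = 0 := fun k =>
      (Finset.sum_eq_zero_iff_of_nonneg (fun k _ => hbnn k)).mp hS k (Finset.mem_univ k)
    have ha0 : ∀ k, a k = 0 := fun k =>
      (Finset.sum_eq_zero_iff_of_nonneg (fun k _ => hann k)).mp (hS'.trans hS) k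
        (Finset.mem_univ k)
    have hv0 : v = 0 := funext fun k => by
      have h1 := hab k; have h2 := hb0 k; have h3 := ha0 k
      simp only [Pi.zero_apply]; linarith
    rw [hv0]; exact inCone_zero M E
  · have hSpos : 0 < S :=
      lt_of_le_of_ne (Finset.sum_nonneg fun k _ => hbnn k) (Ne.symm hS)
    have hdecomp : v = ∑ p : Fin M × Fin M, (a p.1 * b p.2 / S) • dvec M p.1 p.2 := by
      funext k
      rw [Finset.sum_apply]
      have e1 : ∀ p : Fin M × Fin M, ((a p.1 * b p.2 / S) • dvec M p.1 p.2) k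
          = (a p.1 * b p.2 / S) * (if k = p.2 then 1 else 0)
            - (a p.1 * b p.2 / S) * (if k = p.1 then 1 else 0) := by
        intro p; simp [dvec, mul_sub]
      rw [Finset.sum_congr rfl fun p _ => e1 p, Finset.sum_sub_distrib]
      have e2 : ∑ p : Fin M × Fin M, (a p.1 * b p.2 / S) * (if k = p.2 then 1 else 0)
          = b k := by
        rw [Fintype.sum_prod_type]
        have inner : ∀ i, ∑ j, (a i * b j / S) * (if k = j then 1 else 0)
            = a i * b k / S := by
          intro i
          rw [Finset.sum_congr rfl fun j _ => by rw [mul_ite, mul_one, mul_zero]]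
          simp [Finset.sum_ite_eq]
        rw [Finset.sum_congr rfl fun i _ => inner i, ← Finset.sum_div,
          ← Finset.sum_mul, hS']
        exact mul_div_cancel_left₀ _ hS
      have e3 : ∑ p : Fin M × Fin M, (a p.1 * b p.2 / S) * (if k = p.1 then 1 else 0)
          = a k := by
        rw [Fintype.sum_prod_type_right]
        have inner : ∀ j, ∑ i, (a i * b j / S) * (if k = i then 1 else 0)
            = a k * b j / S := by
          intro j
          rw [Finset.sum_congr rfl fun i _ => by rw [mul_ite, mul_one, mul_zero]]
          simp [Finset.sum_ite_eq]
        rw [Finset.sum_congr rfl fun j _ => inner j]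
        have : ∑ j, a k * b j / S = a k * (∑ j, b j) / S := by
          rw [← Finset.sum_div, ← Finset.mul_sum]
        rw [this, mul_div_assoc]
        rw [show (∑ j, b j) / S = 1 from div_self hS, mul_one]
      rw [e2, e3]; exact (hab k).symm
    rw [hdecomp]
    apply Finset.sum_induction _ (InCone M E) (fun _ _ => inCone_add) (inCone_zero M E)
    intro p _
    exact inCone_smul (div_nonneg (mul_nonneg (hann p.1) (hbnn p.2)) hSpos.le)
      (inCone_path (hconn p.1 p.2))

lemma exists_controls {M : ℕ} {E : Finset (Fin M × Fin M)}
    (hconn : ∀ i j : Fin M, Relation.ReflTransGen (fun a b => (a, b) ∈ E) i j)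
    (x : Fin M → ℝ) (hx : ∀ i, 0 < x i) (v : Fin M → ℝ) (hv : ∑ i, v i = 0) :
    ∃ u : Fin M × Fin M → ℝ, (∀ e ∈ E, 0 ≤ u e) ∧
      ∑ e ∈ E, u e • (Bmat M e).mulVec x = v := by
  obtain ⟨c, hc, rfl⟩ := inCone_of_sum_zero hconn v hv
  refine ⟨fun e => c e / x e.1, fun e _ => div_nonneg (hc e) (hx e.1).le, ?_⟩
  refine Finset.sum_congr rfl fun e _ => ?_
  rw [Bmat_mulVec, smul_smul, div_mul_cancel₀ _ (hx e.1).ne']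

theorem small_time_global_controllability'
    (M : ℕ) (hM : 1 ≤ M) (E : Finset (Fin M × Fin M))
    (hloop : ∀ i : Fin M, (i, i) ∉ E)
    (hconn : ∀ i j : Fin M, Relation.ReflTransGen (fun a b => (a, b) ∈ E) i j)
    (x0 xf : Fin M → ℝ)
    (hx0 : (∀ i, 0 < x0 i) ∧ ∑ i, x0 i = 1) (hxf : (∀ i, 0 < xf i) ∧ ∑ i, xf i = 1)
    (T : ℝ) (hT : 0 < T) :
    ∃ (x : ℝ → Fin M → ℝ) (u : Fin M × Fin M → ℝ → ℝ),
      ContDiffOn ℝ 1 x (Set.Icc 0 T) ∧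
      (∀ e ∈ E, ∀ t ∈ Set.Icc (0 : ℝ) T, 0 ≤ u e t) ∧
      x 0 = x0 ∧ x T = xf ∧
      ∀ t ∈ Set.Icc (0 : ℝ) T,
        HasDerivWithinAt x (∑ e ∈ E, u e t • (Bmat M e).mulVec (x t))
          (Set.Icc 0 T) t := by
  classical
  set γ : ℝ → Fin M → ℝ := fun t => x0 + (T⁻¹ * t) • (xf - x0) with hγ
  have hderiv : ∀ t : ℝ, HasDerivAt γ (T⁻¹ • (xf - x0)) t := by
    intro t
    have h1 : HasDerivAt (fun s : ℝ => T⁻¹ * s) T⁻¹ t := by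
      simpa using (hasDerivAt_id t).const_mul T⁻¹
    exact (h1.smul_const (xf - x0)).const_add x0
  have hpos : ∀ t ∈ Set.Icc (0 : ℝ) T, ∀ i, 0 < γ t i := by
    intro t ht i
    have hs0 : 0 ≤ T⁻¹ * t := mul_nonneg (inv_nonneg.2 hT.le) ht.1
    have hs1 : T⁻¹ * t ≤ 1 := by
      calc T⁻¹ * t ≤ T⁻¹ * T := mul_le_mul_of_nonneg_left ht.2 (inv_nonneg.2 hT.le)
        _ = 1 := inv_mul_cancel₀ hT.ne'
    have h1 := hx0.1 i
    have h2 := hxf.1 i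
    simp only [hγ, Pi.add_apply, Pi.smul_apply, Pi.sub_apply, smul_eq_mul]
    nlinarith [mul_nonneg hs0 h2.le, mul_nonneg (sub_nonneg.2 hs1) h1.le]
  have hvsum : ∑ i, (T⁻¹ • (xf - x0)) i = 0 := by
    simp only [Pi.smul_apply, Pi.sub_apply, smul_eq_mul]
    rw [← Finset.mul_sum, Finset.sum_sub_distrib, hxf.2, hx0.2]; ring
  have hU : ∀ t ∈ Set.Icc (0 : ℝ) T, ∃ u : Fin M × Fin M → ℝ,
      (∀ e ∈ E, 0 ≤ u e) ∧ ∑ e ∈ E, u e • (Bmat M e).mulVec (γ t) = T⁻¹ • (xf - x0) :=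
    fun t ht => exists_controls hconn (γ t) (hpos t ht) _ hvsum
  refine ⟨γ, fun e t => if h : t ∈ Set.Icc (0:ℝ) T then (hU t h).choose e else 0,
    ?_, ?_, ?_, ?_, ?_⟩
  · exact (contDiff_const.add ((contDiff_const.mul contDiff_id).smul
      contDiff_const)).contDiffOn
  · intro e he t ht
    simp only [dif_pos ht]
    exact (hU t ht).choose_spec.1 e he
  · simp [hγ]
  · simp only [hγ]
    rw [inv_mul_cancel₀ hT.ne', one_smul]
    funext i; simp
  · intro t ht
    have heq : (∑ e ∈ E, (if h : t ∈ Set.Icc (0:ℝ) T then (hU t h).choose e else 0)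
        • (Bmat M e).mulVec (γ t)) = T⁻¹ • (xf - x0) := by
      rw [Finset.sum_congr rfl fun e _ => by rw [dif_pos ht]]
      exact (hU t ht).choose_spec.2
    rw [heq]
    exact (hderiv t).hasDerivWithinAt

/-- for a strongly connected digraph, the system
`ẋ = ∑_{e ∈ E} u_e(t) B_e x` is small-time globally controllable from every point of
the interior of the probability simplex. -/
theorem small_time_global_controllability
    (M : ℕ) (hM : 1 ≤ M) (E : Finset (Fin M × Fin M))
    (hloop : ∀ i : Fin M, (i, i) ∉ E)
    (hconn : ∀ i j : Fin M, Relation.ReflTransGen (fun a b => (a, b) ∈ E) i j)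
    (x0 xf : Fin M → ℝ)
    (hx0 : x0 ∈ probSimplexInterior M) (hxf : xf ∈ probSimplexInterior M)
    (T : ℝ) (hT : 0 < T) :
    ∃ (x : ℝ → Fin M → ℝ) (u : Fin M × Fin M → ℝ → ℝ),
      ContDiffOn ℝ 1 x (Set.Icc 0 T) ∧
      (∀ e ∈ E, ∀ t ∈ Set.Icc (0 : ℝ) T, 0 ≤ u e t) ∧
      x 0 = x0 ∧ x T = xf ∧
      ∀ t ∈ Set.Icc (0 : ℝ) T,
        HasDerivWithinAt x (∑ e ∈ E, u e t • (Bmat M e).mulVec (x t))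
          (Set.Icc 0 T) t := by
  exact small_time_global_controllability' M hM E hloop hconn x0 xf hx0 hxf T hT
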